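/- arXiv:1602.05136 — 2 statements merged into one kernel-verified Lean document; each statement's English description precedes it below -/
import Mathlib

section
/- For all integers x, y with 1 ≤ x ≤ n-2, 1 ≤ y ≤ n-2 and n ≥ 4, the ratio (2x + y) / min(2x + y, 2y + x) is at most (2n - 3) / n, with equality achieved at x = n - 2, y = 1. -/
/-- For all integers `x, y` with `1 ≤ x ≤ n-2`, `1 ≤ y ≤ n-2` and `n ≥ 4`, the ratio
`(2x + y) / min (2x + y) (2y + x)` is at most `(2n - 3) / n`, with equality achieved at
`x = n - 2`, `y = 1`. -/
theorem stmt0 (n : ℤ) (hn : 4 ≤ n) :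
    (∀ x y : ℤ, 1 ≤ x → x ≤ n - 2 → 1 ≤ y → y ≤ n - 2 →
      (2 * (x : ℚ) + y) / min (2 * (x : ℚ) + y) (2 * (y : ℚ) + x) ≤ (2 * (n : ℚ) - 3) / n) ∧
    (2 * ((n : ℚ) - 2) + 1) / min (2 * ((n : ℚ) - 2) + 1) (2 * (1 : ℚ) + (n - 2))
      = (2 * (n : ℚ) - 3) / n := by
  have hnQ : (4:ℚ) ≤ n := by exact_mod_cast hn
  constructor
  · intro x y hx1 hx2 hy1 hy2
    have hxQ : (1:ℚ) ≤ x := by exact_mod_cast hx1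
    have hyQ : (1:ℚ) ≤ y := by exact_mod_cast hy1
    have hx2Q : (x:ℚ) ≤ n - 2 := by exact_mod_cast hx2
    rcases le_total (2*(x:ℚ)+y) (2*(y:ℚ)+x) with h | h
    · rw [min_eq_left h]
      have hpos : (0:ℚ) < 2*x+y := by linarith
      rw [div_self (ne_of_gt hpos)]
      rw [le_div_iff₀ (by linarith : (0:ℚ) < n)]
      linarith
    · rw [min_eq_right h]
      rw [div_le_div_iff₀ (by linarith : (0:ℚ) < 2*y+x) (by linarith : (0:ℚ) < n)]
      nlinarith [mul_nonneg (by linarith : (0:ℚ) ≤ n - 2 - x) (by linarith : (0:ℚ) ≤ y - 1),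
        mul_nonneg (by linarith : (0:ℚ) ≤ n - 2) (by linarith : (0:ℚ) ≤ y - 1)]
  · have h1 : (2 * ((n : ℚ) - 2) + 1) = 2*n - 3 := by ring
    have h2 : (2 * (1 : ℚ) + (n - 2)) = n := by ring
    rw [h1, h2, min_eq_right (by linarith : (n:ℚ) ≤ 2*n - 3)]
end

section
/- For every integer n ≥ 3 and every integer i with 1 ≤ i ≤ n - 3, the maximum over the three cases of the ratio of an i-step algorithm of class A_1 equals max{(n+i-1)/(n-1), (3i+3)/(i+3), (i+2n-3)/(i+n)}; in particular (3i+3)/(i+3) > (2i+1)/(i+2) for all i ≥ 1. -/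
/-- For every integer `n ≥ 3` and every integer `i` with `1 ≤ i ≤ n - 3`, the maximum over the
cases of the ratio of an `i`-step algorithm of class `A₁` equals
`max {(n+i-1)/(n-1), (3i+3)/(i+3), (i+2n-3)/(i+n)}`; in particular
`(3i+3)/(i+3) > (2i+1)/(i+2)` for all `i ≥ 1`. -/
theorem stmt5 (n i : ℤ) (hn : 3 ≤ n) (hi1 : 1 ≤ i) (hi2 : i ≤ n - 3) :
    max (max (((n : ℚ) + i - 1) / ((n : ℚ) - 1)) ((2 * (i : ℚ) + 1) / ((i : ℚ) + 2)))
        (max ((3 * (i : ℚ) + 3) / ((i : ℚ) + 3)) (((i : ℚ) + 2 * n - 3) / ((i : ℚ) + n)))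
      = max (max (((n : ℚ) + i - 1) / ((n : ℚ) - 1)) ((3 * (i : ℚ) + 3) / ((i : ℚ) + 3)))
          (((i : ℚ) + 2 * n - 3) / ((i : ℚ) + n)) ∧
    (2 * (i : ℚ) + 1) / ((i : ℚ) + 2) < (3 * (i : ℚ) + 3) / ((i : ℚ) + 3) := by
  have hiq : (1 : ℚ) ≤ (i : ℚ) := by exact_mod_cast hi1
  have h2 : (0 : ℚ) < (i : ℚ) + 2 := by linarith
  have h3 : (0 : ℚ) < (i : ℚ) + 3 := by linarith
  have hlt : (2 * (i : ℚ) + 1) / ((i : ℚ) + 2) < (3 * (i : ℚ) + 3) / ((i : ℚ) + 3) := by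
    rw [div_lt_div_iff₀ h2 h3]; nlinarith
  refine ⟨?_, hlt⟩
  rw [max_assoc, max_assoc]
  congr 1
  exact max_eq_right (le_max_of_le_left hlt.le)
end
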